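/- The cubic hypersurface X = {f = 0} ⊂ P⁴ is nonsingular at every point of the line l = {x = y = z = 0} — that is, for every (u₀, v₀) ∈ ℂ² \ {(0,0)}, at least one of the five partial derivatives of f is nonzero at the point (0,0,0,u₀,v₀) — if and only if the quadratic form Q_Θ = L₁₁L₂₂ − L₁₂² is neither the zero polynomial nor the square of a homogeneous linear polynomial in x, y, z. -/

import Mathlib

open MvPolynomial
lemma finsupp_degree_one {n : ℕ} (m : Fin n →₀ ℕ) (h : m.degree = 1) :
    ∃ j, m = Finsupp.single j 1 := by
  have hm0 : m ≠ 0 := by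
    intro h0; rw [h0, map_zero] at h; exact one_ne_zero h.symm
  obtain ⟨j, hj⟩ := Finsupp.support_nonempty_iff.mpr hm0
  have hj1 : m j = 1 := by
    have hle : m j ≤ m.degree := Finset.single_le_sum (fun _ _ => Nat.zero_le _) hj
    have hpos : 0 < m j := Nat.pos_of_ne_zero (Finsupp.mem_support_iff.mp hj)
    omega
  refine ⟨j, ?_⟩
  ext k
  rcases eq_or_ne k j with rfl | hkj
  · simp [hj1]
  · rw [Finsupp.single_apply, if_neg (Ne.symm hkj)]
    by_contra hk
    have hkmem : k ∈ m.support := Finsupp.mem_support_iff.mpr hk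
    have hsub : ({j, k} : Finset (Fin n)) ⊆ m.support := by
      intro x hx
      simp only [Finset.mem_insert, Finset.mem_singleton] at hx
      rcases hx with rfl | rfl <;> assumption
    have hsum : ∑ x ∈ ({j, k} : Finset (Fin n)), m x ≤ m.degree :=
      Finset.sum_le_sum_of_subset hsub
    rw [Finset.sum_pair (Ne.symm hkj)] at hsum
    have : 0 < m k := Nat.pos_of_ne_zero hk
    omega

lemma degree_single_one {n : ℕ} (i : Fin n) : (Finsupp.single i 1 : Fin n →₀ ℕ).degree = 1 := by
  simp [Finsupp.degree_single, Finsupp.support_single_ne_zero i one_ne_zero]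

lemma homog_zero_eq_C {P : MvPolynomial (Fin 5) ℂ} (h : P.IsHomogeneous 0) :
    P = C (constantCoeff P) := by
  ext m
  rcases eq_or_ne m 0 with rfl | hm
  · simp [constantCoeff_eq]
  · rw [h.coeff_eq_zero (by rwa [Ne, Finsupp.degree_eq_zero_iff]), coeff_C, if_neg (Ne.symm hm)]

lemma eval_supported_eq_constantCoeff {s : Set (Fin 5)} {p : Fin 5 → ℂ}
    (hp : ∀ j ∈ s, p j = 0) {P : MvPolynomial (Fin 5) ℂ} (hP : P ∈ supported ℂ s) :
    eval p P = constantCoeff P := by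
  induction hP using Algebra.adjoin_induction with
  | mem x hx =>
    obtain ⟨j, hj, rfl⟩ := hx
    simp [hp j hj]
  | algebraMap r => simp [algebraMap_eq]
  | add x y _ _ hx hy => simp [hx, hy]
  | mul x y _ _ hx hy => simp [hx, hy]

lemma pderiv_mem_supported {s : Set (Fin 5)} (i : Fin 5) {P : MvPolynomial (Fin 5) ℂ}
    (hP : P ∈ supported ℂ s) : pderiv i P ∈ supported ℂ s := by
  induction hP using Algebra.adjoin_induction with
  | mem x hx =>
    obtain ⟨j, hj, rfl⟩ := hx
    rcases eq_or_ne j i with rfl | hji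
    · rw [pderiv_X_self]; exact Subalgebra.one_mem _
    · rw [pderiv_X_of_ne hji]; exact Subalgebra.zero_mem _
  | algebraMap r => rw [algebraMap_eq, pderiv_C]; exact Subalgebra.zero_mem _
  | add x y hx' hy' hx hy => rw [map_add]; exact Subalgebra.add_mem _ hx hy
  | mul x y hx' hy' hx hy =>
    rw [pderiv_mul]
    exact Subalgebra.add_mem _ (Subalgebra.mul_mem _ hx hy')
      (Subalgebra.mul_mem _ hx' hy)

lemma constantCoeff_pderiv (i : Fin 5) (P : MvPolynomial (Fin 5) ℂ) :
    constantCoeff (pderiv i P) = coeff (Finsupp.single i 1) P := by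
  induction P using MvPolynomial.induction_on' with
  | monomial m a =>
    rw [pderiv_monomial]
    rw [constantCoeff_eq, coeff_monomial, coeff_monomial]
    rcases eq_or_ne m (Finsupp.single i 1) with rfl | hm
    · simp
    · rw [if_neg hm]
      rcases eq_or_ne (m - Finsupp.single i 1) 0 with h0 | h0
      · rw [if_pos h0]
        have hmi : m i = 0 := by
          by_contra hmi
          apply hm
          ext k
          have := Finsupp.ext_iff.mp h0 k
          rw [Finsupp.tsub_apply] at this
          rcases eq_or_ne k i with rfl | hk
          · have h1 : m k - 1 = 0 := by simpa using this
            rw [Finsupp.single_eq_same]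
            omega
          · simpa [Finsupp.single_apply, if_neg (Ne.symm hk)] using this
        simp [hmi]
      · rw [if_neg h0]
  | add p q hp hq => simp only [map_add, coeff_add, hp, hq]

lemma top_component_ne_zero {a : MvPolynomial (Fin 5) ℂ} (ha : a ≠ 0) :
    homogeneousComponent a.totalDegree a ≠ 0 := by
  obtain ⟨d, hd, hsup⟩ := Finset.exists_mem_eq_sup a.support
    (support_nonempty.mpr ha) (fun m => m.sum fun _ e => e)
  intro h0
  have hdeg : d.degree = a.totalDegree := by
    rw [totalDegree, hsup]; rfl
  have := coeff_homogeneousComponent (σ := Fin 5) (R := ℂ) a.totalDegree a d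
  rw [h0, coeff_zero, if_pos hdeg] at this
  exact mem_support_iff.mp hd this.symm

lemma totalDegree_mul_eq {a b : MvPolynomial (Fin 5) ℂ} (ha : a ≠ 0) (hb : b ≠ 0) :
    (a * b).totalDegree = a.totalDegree + b.totalDegree := by
  refine le_antisymm (totalDegree_mul a b) ?_
  set da := a.totalDegree with hda
  set db := b.totalDegree with hdb
  have hkey : homogeneousComponent (da + db) (a * b)
      = homogeneousComponent da a * homogeneousComponent db b := by
    conv_lhs => rw [← sum_homogeneousComponent a, ← sum_homogeneousComponent b]
    rw [Finset.sum_mul_sum, map_sum]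
    rw [Finset.sum_eq_single_of_mem da (Finset.self_mem_range_succ da)]
    · rw [map_sum, Finset.sum_eq_single_of_mem db (Finset.self_mem_range_succ db)]
      · rw [homogeneousComponent_of_mem ((mem_homogeneousSubmodule _ _).mpr
          ((homogeneousComponent_isHomogeneous da a).mul
            (homogeneousComponent_isHomogeneous db b))), if_pos rfl]
      · intro k hk hkne
        rw [homogeneousComponent_of_mem ((mem_homogeneousSubmodule _ _).mpr
          ((homogeneousComponent_isHomogeneous da a).mul
            (homogeneousComponent_isHomogeneous k b))), if_neg (by omega)]
    · intro j hj hjne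
      rw [map_sum, Finset.sum_eq_zero]
      intro k hk
      have hj' : j ≤ da := by simpa using Nat.lt_succ_iff.mp (Finset.mem_range.mp hj)
      have hk' : k ≤ db := by simpa using Nat.lt_succ_iff.mp (Finset.mem_range.mp hk)
      rw [homogeneousComponent_of_mem ((mem_homogeneousSubmodule _ _).mpr
        ((homogeneousComponent_isHomogeneous j a).mul
          (homogeneousComponent_isHomogeneous k b))), if_neg (by omega)]
  have hne : homogeneousComponent (da + db) (a * b) ≠ 0 := by
    rw [hkey]
    exact mul_ne_zero (top_component_ne_zero ha) (top_component_ne_zero hb)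
  obtain ⟨d, hd⟩ : ∃ d, coeff d (homogeneousComponent (da + db) (a * b)) ≠ 0 := by
    by_contra h
    push_neg at h
    exact hne (MvPolynomial.ext _ _ fun d => by rw [h d, coeff_zero])
  have hd' := coeff_homogeneousComponent (da + db) (a * b) d
  by_cases hdd : d.degree = da + db
  · rw [if_pos hdd] at hd'
    have : d ∈ (a * b).support := mem_support_iff.mpr (by rw [← hd']; exact hd)
    have hle := le_totalDegree this
    have : (d.sum fun _ e => e) = d.degree := rfl
    omega
  · rw [if_neg hdd] at hd'; exact absurd hd' hd

lemma eq_C_of_totalDegree_eq_zero {p : MvPolynomial (Fin 5) ℂ} (h : p.totalDegree = 0) :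
    p = C (constantCoeff p) :=
  homog_zero_eq_C (by rwa [totalDegree_zero_iff_isHomogeneous] at h)

lemma isUnit_of_td_zero {p : MvPolynomial (Fin 5) ℂ} (hp : p ≠ 0) (h : p.totalDegree = 0) :
    IsUnit p := by
  have hc : constantCoeff p ≠ 0 := by
    intro h0
    exact hp (by rw [eq_C_of_totalDegree_eq_zero h, h0, map_zero])
  rw [eq_C_of_totalDegree_eq_zero h]
  exact isUnit_iff_exists_inv.mpr ⟨C (constantCoeff p)⁻¹, by
    rw [← map_mul, mul_inv_cancel₀ hc, map_one]⟩

lemma prime_of_homog_one {L : MvPolynomial (Fin 5) ℂ} (hL : L.IsHomogeneous 1) (hL0 : L ≠ 0) :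
    Prime L := by
  rw [← UniqueFactorizationMonoid.irreducible_iff_prime]
  constructor
  · intro hU
    obtain ⟨q, hq⟩ := isUnit_iff_exists_inv.mp hU
    have := congrArg constantCoeff hq
    rw [map_mul, map_one] at this
    have hc0 : constantCoeff L = 0 :=
      hL.coeff_eq_zero (by rw [map_zero]; exact zero_ne_one)
    rw [hc0, zero_mul] at this
    exact zero_ne_one this
  · intro p q hpq
    have hp0 : p ≠ 0 := by rintro rfl; rw [zero_mul] at hpq; exact hL0 hpq
    have hq0 : q ≠ 0 := by rintro rfl; rw [mul_zero] at hpq; exact hL0 hpq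
    have htd : p.totalDegree + q.totalDegree = 1 := by
      rw [← totalDegree_mul_eq hp0 hq0, ← hpq, hL.totalDegree hL0]
    rcases Nat.add_eq_one_iff.mp htd with ⟨h1, _⟩ | ⟨_, h2⟩
    · exact Or.inl (isUnit_of_td_zero hp0 h1)
    · exact Or.inr (isUnit_of_td_zero hq0 h2)

lemma exists_C_of_dvd {L P : MvPolynomial (Fin 5) ℂ} (hL : L.IsHomogeneous 1) (hL0 : L ≠ 0)
    (hP : P.IsHomogeneous 1) (hdvd : L ∣ P) : ∃ c : ℂ, P = C c * L := by
  obtain ⟨g, hg⟩ := hdvd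
  rcases eq_or_ne P 0 with rfl | hP0
  · exact ⟨0, by rw [map_zero, zero_mul]⟩
  have hg0 : g ≠ 0 := by rintro rfl; rw [mul_zero] at hg; exact hP0 hg
  have htd : L.totalDegree + g.totalDegree = 1 := by
    rw [← totalDegree_mul_eq hL0 hg0, ← hg, hP.totalDegree hP0]
  rw [hL.totalDegree hL0] at htd
  have hgtd : g.totalDegree = 0 := by omega
  refine ⟨constantCoeff g, ?_⟩
  rw [hg, mul_comm]
  congr 1
  exact eq_C_of_totalDegree_eq_zero hgtd

lemma CI_sq : (C Complex.I : MvPolynomial (Fin 5) ℂ)^2 = -1 := by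
  rw [← map_pow, Complex.I_sq, map_neg, map_one]

lemma key2 (L11 L12 L22 : MvPolynomial (Fin 5) ℂ)
    (h11 : L11.IsHomogeneous 1) (h12 : L12.IsHomogeneous 1) (h22 : L22.IsHomogeneous 1) :
    (∀ u v : ℂ, ¬(u = 0 ∧ v = 0) →
      (C u)^2 * L11 + 2 * C u * C v * L12 + (C v)^2 * L22 ≠ 0)
    ↔ ¬∃ M : MvPolynomial (Fin 5) ℂ, M.IsHomogeneous 1 ∧ L11 * L22 - L12^2 = M^2 := by
  constructor
  · intro hforall
    rintro ⟨M, hM1, hMeq⟩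
    by_cases h110 : L11 = 0
    · exact hforall 1 0 (by simp) (by simp [h110])
    · have hfac : L11 * L22 = (L12 + C Complex.I * M) * (L12 - C Complex.I * M) := by
        linear_combination hMeq + M^2 * CI_sq
      have hdvd := (prime_of_homog_one h11 h110).2.2 (L12 + C Complex.I * M)
          (L12 - C Complex.I * M) ⟨L22, hfac.symm⟩
      obtain ⟨N, hN1, hN2, hNd⟩ : ∃ N : MvPolynomial (Fin 5) ℂ,
          N.IsHomogeneous 1 ∧ N^2 = M^2 ∧ L11 ∣ L12 + C Complex.I * N := by
        rcases hdvd with h | h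
        · exact ⟨M, hM1, rfl, h⟩
        · exact ⟨-M, hM1.neg, by ring, by rw [mul_neg, ← sub_eq_add_neg]; exact h⟩
      have hPhom : (L12 + C Complex.I * N).IsHomogeneous 1 :=
        h12.add ((isHomogeneous_C _ _).mul hN1)
      obtain ⟨c, hc⟩ := exists_C_of_dvd h11 h110 hPhom hNd
      refine hforall (-c) 1 (by simp) ?_
      have hmain : L11 * ((C (-c))^2 * L11 + 2 * C (-c) * C 1 * L12 + (C 1)^2 * L22) = 0 := by
        rw [map_neg, map_one]
        linear_combination (L12 - C Complex.I * N - C c * L11) * hc + N^2 * CI_sq - hN2 + hMeq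
      exact (mul_eq_zero.mp hmain).resolve_left h110
  · intro hne u v huv hG
    apply hne
    by_cases hv : v = 0
    · have hu : u ≠ 0 := fun h => huv ⟨h, hv⟩
      have h110 : L11 = 0 := by
        have h1 : (C u : MvPolynomial (Fin 5) ℂ)^2 * L11 = 0 := by
          rw [hv] at hG
          simpa using hG
        have hCu : (C u : MvPolynomial (Fin 5) ℂ) ≠ 0 := fun h =>
          hu (by simpa using (C_injective (Fin 5) ℂ) (h.trans (map_zero _).symm))
        exact (mul_eq_zero.mp h1).resolve_left (pow_ne_zero 2 hCu)
      refine ⟨C Complex.I * L12, (isHomogeneous_C _ _).mul h12, ?_⟩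
      rw [h110]
      linear_combination (-(L12^2)) * CI_sq
    · have hCv : (C v : MvPolynomial (Fin 5) ℂ) ≠ 0 := fun h =>
        hv (by simpa using (C_injective (Fin 5) ℂ) (h.trans (map_zero _).symm))
      have hbd : (C v : MvPolynomial (Fin 5) ℂ) * C (Complex.I / v) = C Complex.I := by
        rw [← map_mul]
        congr 1
        field_simp
      refine ⟨C (Complex.I / v) * (C u * L11 + C v * L12),
        (isHomogeneous_C _ _).mul (((isHomogeneous_C _ _).mul h11).add
          ((isHomogeneous_C _ _).mul h12)), ?_⟩
      have h2 : (C v : MvPolynomial (Fin 5) ℂ)^2 * (L11 * L22 - L12^2)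
          = (C v)^2 * (C (Complex.I / v) * (C u * L11 + C v * L12))^2 := by
        linear_combination L11 * hG - (C u * L11 + C v * L12)^2 * CI_sq
          - ((C v * C (Complex.I / v) + C Complex.I) * (C u * L11 + C v * L12)^2) * hbd
      exact mul_left_cancel₀ (pow_ne_zero 2 hCv) h2

lemma key1
    (L11 L12 L22 Q1 Q2 W : MvPolynomial (Fin 5) ℂ)
    (hL11 : L11.IsHomogeneous 1) (hL12 : L12.IsHomogeneous 1) (hL22 : L22.IsHomogeneous 1)
    (hQ1 : Q1.IsHomogeneous 2) (hQ2 : Q2.IsHomogeneous 2) (hW : W.IsHomogeneous 3)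
    (hL11s : L11 ∈ supported ℂ ({0, 1, 2} : Set (Fin 5)))
    (hL12s : L12 ∈ supported ℂ ({0, 1, 2} : Set (Fin 5)))
    (hL22s : L22 ∈ supported ℂ ({0, 1, 2} : Set (Fin 5)))
    (hQ1s : Q1 ∈ supported ℂ ({0, 1, 2} : Set (Fin 5)))
    (hQ2s : Q2 ∈ supported ℂ ({0, 1, 2} : Set (Fin 5)))
    (hWs : W ∈ supported ℂ ({0, 1, 2} : Set (Fin 5)))
    (f : MvPolynomial (Fin 5) ℂ)
    (hf : f = X 3 ^ 2 * L11 + 2 * X 3 * X 4 * L12 + X 4 ^ 2 * L22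
      + 2 * X 3 * Q1 + 2 * X 4 * Q2 + W)
    (u v : ℂ) :
    (∃ i : Fin 5,
        eval (fun j => if j = 3 then u else if j = 4 then v else 0) (pderiv i f) ≠ 0)
    ↔ (C u)^2 * L11 + 2 * C u * C v * L12 + (C v)^2 * L22 ≠ 0 := by
  set p : Fin 5 → ℂ := fun j => if j = 3 then u else if j = 4 then v else 0 with hpdef
  have hp : ∀ j ∈ ({0, 1, 2} : Set (Fin 5)), p j = 0 := by
    intro j hj
    rcases hj with rfl | rfl | rfl <;> rfl
  have hzero : ∀ {P : MvPolynomial (Fin 5) ℂ} {n : ℕ}, P.IsHomogeneous n → n ≠ 0 →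
      P ∈ supported ℂ ({0, 1, 2} : Set (Fin 5)) → eval p P = 0 := by
    intro P n hPh hn hPs
    rw [eval_supported_eq_constantCoeff hp hPs, constantCoeff_eq]
    exact hPh.coeff_eq_zero (by rw [map_zero]; exact (Ne.symm hn))
  have e11 := hzero hL11 one_ne_zero hL11s
  have e12 := hzero hL12 one_ne_zero hL12s
  have e22 := hzero hL22 one_ne_zero hL22s
  have eQ1 := hzero hQ1 two_ne_zero hQ1s
  have eQ2 := hzero hQ2 two_ne_zero hQ2s
  have eW := hzero hW three_ne_zero hWs
  have hd : ∀ (P : MvPolynomial (Fin 5) ℂ), P ∈ supported ℂ ({0, 1, 2} : Set (Fin 5)) →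
      ∀ i, eval p (pderiv i P) = coeff (Finsupp.single i 1) P := by
    intro P hPs i
    rw [eval_supported_eq_constantCoeff hp (pderiv_mem_supported i hPs), constantCoeff_pderiv]
  have cQ1 : ∀ i : Fin 5, coeff (Finsupp.single i 1) Q1 = 0 := fun i =>
    hQ1.coeff_eq_zero (by rw [degree_single_one]; omega)
  have cQ2 : ∀ i : Fin 5, coeff (Finsupp.single i 1) Q2 = 0 := fun i =>
    hQ2.coeff_eq_zero (by rw [degree_single_one]; omega)
  have cW : ∀ i : Fin 5, coeff (Finsupp.single i 1) W = 0 := fun i =>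
    hW.coeff_eq_zero (by rw [degree_single_one]; omega)
  have hX3 : eval p (X 3 : MvPolynomial (Fin 5) ℂ) = u := by simp [hpdef]
  have hX4 : eval p (X 4 : MvPolynomial (Fin 5) ℂ) = v := by simp [hpdef]
  have hDf : ∀ i : Fin 5, eval p (pderiv i f)
      = u^2 * coeff (Finsupp.single i 1) L11 + 2*u*v * coeff (Finsupp.single i 1) L12
        + v^2 * coeff (Finsupp.single i 1) L22 := by
    intro i
    rw [hf]
    simp only [map_add, pderiv_mul, map_mul, map_pow, e11, e12, e22, eQ1, eQ2, eW,
      hd L11 hL11s, hd L12 hL12s, hd L22 hL22s, hd Q1 hQ1s, hd Q2 hQ2s, hd W hWs,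
      cQ1, cQ2, cW, hX3, hX4, map_ofNat, mul_zero, zero_mul, add_zero, zero_add]
    try ring
  set G : MvPolynomial (Fin 5) ℂ := (C u)^2 * L11 + 2 * C u * C v * L12 + (C v)^2 * L22
    with hGdef
  have hGC : G = C (u^2) * L11 + C (2*u*v) * L12 + C (v^2) * L22 := by
    rw [hGdef, show ((2:MvPolynomial (Fin 5) ℂ)) = C 2 from (map_ofNat _ 2).symm,
      ← map_pow, ← map_pow, ← map_mul, ← map_mul]
  have hGhom : G.IsHomogeneous 1 := by
    rw [hGC]
    exact (((isHomogeneous_C _ _).mul hL11).add ((isHomogeneous_C _ _).mul hL12)).add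
      ((isHomogeneous_C _ _).mul hL22)
  have hGcoeff : ∀ i : Fin 5, coeff (Finsupp.single i 1) G
      = u^2 * coeff (Finsupp.single i 1) L11 + 2*u*v * coeff (Finsupp.single i 1) L12
        + v^2 * coeff (Finsupp.single i 1) L22 := by
    intro i
    rw [hGC]
    simp only [coeff_add, coeff_C_mul]
  constructor
  · rintro ⟨i, hi⟩ hG0
    rw [hDf i] at hi
    rw [← hGcoeff i, hG0, coeff_zero] at hi
    exact hi rfl
  · intro hG0
    have : ∃ m, coeff m G ≠ 0 := by
      by_contra h
      push_neg at h
      exact hG0 (MvPolynomial.ext _ _ fun m => by rw [h m, coeff_zero])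
    obtain ⟨m, hm⟩ := this
    have hmd : m.degree = 1 := by
      by_contra hne
      exact hm (hGhom.coeff_eq_zero hne)
    obtain ⟨i, rfl⟩ := finsupp_degree_one m hmd
    exact ⟨i, by rw [hDf i, ← hGcoeff i]; exact hm⟩

/-- The cubic hypersurface X = {f = 0} ⊂ P⁴, where
f = u²L₁₁ + 2uvL₁₂ + v²L₂₂ + 2uQ₁ + 2vQ₂ + C (variables x,y,z,u,v = X 0,…,X 4 and
L₁₁,L₁₂,L₂₂,Q₁,Q₂,C homogeneous of degrees 1,1,1,2,2,3 in x,y,z only), is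
nonsingular at every point of the line l = {x = y = z = 0}, i.e. for each
(u₀,v₀) ≠ (0,0) some partial derivative of f is nonzero at (0,0,0,u₀,v₀), if and
only if Q_Θ = L₁₁L₂₂ − L₁₂² is neither the zero polynomial nor the square of a
homogeneous linear polynomial. -/
theorem stmt_15
    (L11 L12 L22 Q1 Q2 C : MvPolynomial (Fin 5) ℂ)
    (hL11 : L11.IsHomogeneous 1) (hL12 : L12.IsHomogeneous 1) (hL22 : L22.IsHomogeneous 1)
    (hQ1 : Q1.IsHomogeneous 2) (hQ2 : Q2.IsHomogeneous 2) (hC : C.IsHomogeneous 3)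
    (hL11s : L11 ∈ MvPolynomial.supported ℂ ({0, 1, 2} : Set (Fin 5)))
    (hL12s : L12 ∈ MvPolynomial.supported ℂ ({0, 1, 2} : Set (Fin 5)))
    (hL22s : L22 ∈ MvPolynomial.supported ℂ ({0, 1, 2} : Set (Fin 5)))
    (hQ1s : Q1 ∈ MvPolynomial.supported ℂ ({0, 1, 2} : Set (Fin 5)))
    (hQ2s : Q2 ∈ MvPolynomial.supported ℂ ({0, 1, 2} : Set (Fin 5)))
    (hCs : C ∈ MvPolynomial.supported ℂ ({0, 1, 2} : Set (Fin 5)))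
    (f : MvPolynomial (Fin 5) ℂ)
    (hf : f = X 3 ^ 2 * L11 + 2 * X 3 * X 4 * L12 + X 4 ^ 2 * L22
      + 2 * X 3 * Q1 + 2 * X 4 * Q2 + C) :
    (∀ u₀ v₀ : ℂ, ¬(u₀ = 0 ∧ v₀ = 0) →
      ∃ i : Fin 5,
        eval (fun j => if j = 3 then u₀ else if j = 4 then v₀ else 0) (pderiv i f) ≠ 0)
    ↔ (L11 * L22 - L12 ^ 2 ≠ 0 ∧
        ¬∃ M : MvPolynomial (Fin 5) ℂ, M.IsHomogeneous 1 ∧ L11 * L22 - L12 ^ 2 = M ^ 2) := by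
  have hkey1 := key1 L11 L12 L22 Q1 Q2 C hL11 hL12 hL22 hQ1 hQ2 hC
    hL11s hL12s hL22s hQ1s hQ2s hCs f hf
  have h1 : (∀ u₀ v₀ : ℂ, ¬(u₀ = 0 ∧ v₀ = 0) →
      ∃ i : Fin 5,
        eval (fun j => if j = 3 then u₀ else if j = 4 then v₀ else 0) (pderiv i f) ≠ 0)
      ↔ (∀ u v : ℂ, ¬(u = 0 ∧ v = 0) →
        (MvPolynomial.C u)^2 * L11 + 2 * MvPolynomial.C u * MvPolynomial.C v * L12
          + (MvPolynomial.C v)^2 * L22 ≠ 0) := by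
    constructor
    · intro h u v huv
      exact (hkey1 u v).mp (h u v huv)
    · intro h u v huv
      exact (hkey1 u v).mpr (h u v huv)
  rw [h1, key2 L11 L12 L22 hL11 hL12 hL22]
  constructor
  · intro h
    refine ⟨fun h0 => h ⟨0, isHomogeneous_zero _ _ _, by rw [h0]; ring⟩, h⟩
  · rintro ⟨_, h⟩
    exact h
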